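/- Let k ≥ 2 and define p_n(z) by the recursion p_0 = 1, p_1 = z, p_2 = z² − 2k, p_{n+1} = z·p_n − (2k−1)·p_{n−1} for n ≥ 2, and let e_n = 2k(2k−1)^{n−1} for n ≥ 1, e_0 = 1. Then for every n ≥ 1, z = 2k is a root of multiplicity exactly one of the polynomial p_n(z) − e_n. -/

import Mathlib

/-- The sphere of radius `n` about the identity in the free group `F_k`:
the finite set of elements of reduced word length `n`. -/
noncomputable def sphere (k n : ℕ) : Finset (FreeGroup (Fin k)) :=
  (Set.Finite.preimage (Function.Injective.injOn FreeGroup.toWord_injective)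
    (List.finite_length_eq ((Fin k) × Bool) n)).toFinset

/-- `χ_n = ∑_{|x| = n} x`, the sum of the sphere of radius `n` in `ℂ[F_k]`. -/
noncomputable def chi (k n : ℕ) : MonoidAlgebra ℂ (FreeGroup (Fin k)) :=
  ∑ x ∈ sphere k n, MonoidAlgebra.of ℂ (FreeGroup (Fin k)) x

/-- The polynomials `p_0 = 1`, `p_1 = z`, `p_2 = z² - 2k`,
`p_{n+1} = z p_n - (2k-1) p_{n-1}` for `n ≥ 2`. -/
noncomputable def p (k : ℕ) : ℕ → Polynomial ℂ
  | 0 => 1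
  | 1 => Polynomial.X
  | 2 => Polynomial.X ^ 2 - Polynomial.C ((2 * k : ℕ) : ℂ)
  | (n + 3) => Polynomial.X * p k (n + 2) - Polynomial.C ((2 * k - 1 : ℕ) : ℂ) * p k (n + 1)

/-- `e_0 = 1` and `e_n = 2k(2k-1)^{n-1}` for `n ≥ 1`, the cardinality of the sphere. -/
def eN (k n : ℕ) : ℕ := if n = 0 then 1 else 2 * k * (2 * k - 1) ^ (n - 1)


/-- derivative values at 2k -/
def dSeq (k : ℕ) : ℕ → ℤ
  | 0 => 0
  | 1 => 1
  | 2 => 4 * k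
  | (n + 3) => (eN k (n+2) : ℤ) + 2*k * dSeq k (n+2) - (2*k-1) * dSeq k (n+1)

lemma eN_rec (k n : ℕ) (hk : 1 ≤ k) :
    eN k (n+3) + (2*k-1) * eN k (n+1) = 2*k * eN k (n+2) := by
  have heS : ∀ m, eN k (m+1) = 2*k*(2*k-1)^m := fun m => by simp [eN]
  rw [heS (n+2), heS n, heS (n+1)]
  set q := 2*k-1 with hqdef
  have hq : q + 1 = 2*k := by omega
  rw [← hq]
  ring

lemma eN_cast (k n : ℕ) (hk : 1 ≤ k) :
    ((eN k (n+3) : ℕ) : ℂ) = ((2*k : ℕ) : ℂ) * ((eN k (n+2) : ℕ) : ℂ)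
      - ((2*k-1 : ℕ) : ℂ) * ((eN k (n+1) : ℕ) : ℂ) := by
  have h := congrArg (fun m : ℕ => (m : ℂ)) (eN_rec k n hk)
  simp only [Nat.cast_add, Nat.cast_mul] at h
  push_cast at h ⊢
  linear_combination h

lemma evalP (k : ℕ) (hk : 1 ≤ k) : ∀ n, (p k n).eval ((2*k : ℕ) : ℂ) = (eN k n : ℂ)
  | 0 => by simp [p, eN]
  | 1 => by simp [p, eN]
  | 2 => by
      have h1 : (1:ℕ) ≤ 2*k := by omega
      simp only [p, Polynomial.eval_sub, Polynomial.eval_pow, Polynomial.eval_X,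
        Polynomial.eval_C, eN, if_neg (by norm_num : (2:ℕ) ≠ 0)]
      push_cast [Nat.cast_sub h1]
      ring
  | (n + 3) => by
      have h2 := evalP k hk (n+2)
      have h1 := evalP k hk (n+1)
      simp only [p, Polynomial.eval_sub, Polynomial.eval_mul, Polynomial.eval_X,
        Polynomial.eval_C, h2, h1]
      rw [eN_cast k n hk]
lemma evalD (k : ℕ) (hk : 1 ≤ k) :
    ∀ n, (Polynomial.derivative (p k n)).eval ((2*k : ℕ) : ℂ) = (dSeq k n : ℂ)
  | 0 => by simp [p, dSeq]
  | 1 => by simp [p, dSeq]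
  | 2 => by
      simp only [p, Polynomial.derivative_sub, Polynomial.derivative_pow,
        Polynomial.derivative_X, Polynomial.derivative_C, sub_zero, dSeq,
        Polynomial.eval_mul, Polynomial.eval_C, Polynomial.eval_X, Polynomial.eval_pow,
        Polynomial.eval_one]
      push_cast
      ring
  | (n + 3) => by
      have h2 := evalD k hk (n+2)
      have h1 := evalD k hk (n+1)
      have hp2 := evalP k hk (n+2)
      simp only [p, Polynomial.derivative_sub, Polynomial.derivative_mul,
        Polynomial.derivative_X, Polynomial.derivative_C, one_mul, zero_mul, zero_add,
        Polynomial.eval_sub, Polynomial.eval_add, Polynomial.eval_mul, Polynomial.eval_X,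
        Polynomial.eval_C, h2, h1, hp2]
      simp only [dSeq]
      push_cast [Nat.cast_sub (show 1 ≤ 2*k by omega)]
      ring

lemma dSeq_pos (k : ℕ) (hk : 2 ≤ k) : ∀ n, 0 ≤ dSeq k n ∧ (2*k-1) * dSeq k n < dSeq k (n+1) := by
  have hkZ : (2:ℤ) ≤ (k:ℤ) := by exact_mod_cast hk
  intro n
  induction n with
  | zero => constructor <;> simp [dSeq]
  | succ m ih =>
    obtain ⟨h0, hlt⟩ := ih
    have hq : (0:ℤ) ≤ 2*(k:ℤ)-1 := by linarith
    have h0' : 0 ≤ dSeq k (m+1) := le_trans (mul_nonneg hq h0) hlt.le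
    refine ⟨h0', ?_⟩
    cases m with
    | zero =>
      simp only [dSeq]
      nlinarith
    | succ m =>
      show (2*(k:ℤ)-1) * dSeq k (m+2) < dSeq k (m+3)
      have he : 0 < (eN k (m+2) : ℤ) := by
        have : 0 < eN k (m+2) := by
          simp only [eN, if_neg (Nat.succ_ne_zero _)]
          exact Nat.mul_pos (by omega) (pow_pos (by omega) _)
        exact_mod_cast this
      simp only [dSeq]
      nlinarith [hlt]

/-- `z = 2k` is a root of multiplicity exactly one of `p_n(z) - e_n` for every `n ≥ 1`. -/
theorem stmt9 (k : ℕ) (hk : 2 ≤ k) (n : ℕ) (hn : 1 ≤ n) :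
    (p k n - Polynomial.C ((eN k n : ℕ) : ℂ)).rootMultiplicity (((2 * k : ℕ) : ℂ)) = 1 := by
  have hk1 : 1 ≤ k := by omega
  set f := p k n - Polynomial.C ((eN k n : ℕ) : ℂ) with hf
  have hroot : f.IsRoot (((2*k : ℕ)) : ℂ) := by
    show f.eval _ = 0
    rw [hf, Polynomial.eval_sub, Polynomial.eval_C, evalP k hk1 n, sub_self]
  have hd : (Polynomial.derivative f).eval ((2*k : ℕ) : ℂ) = (dSeq k n : ℂ) := by
    rw [hf, Polynomial.derivative_sub, Polynomial.derivative_C, sub_zero, evalD k hk1 n]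
  have hdn : 0 < dSeq k n := by
    obtain ⟨m, rfl⟩ : ∃ m, n = m + 1 := ⟨n - 1, by omega⟩
    obtain ⟨h0, hlt⟩ := dSeq_pos k hk m
    have hq : (0:ℤ) ≤ 2*(k:ℤ)-1 := by
      have : (2:ℤ) ≤ (k:ℤ) := by exact_mod_cast hk
      linarith
    exact lt_of_le_of_lt (mul_nonneg hq h0) hlt
  have hdne : (Polynomial.derivative f).eval ((2*k : ℕ) : ℂ) ≠ 0 := by
    rw [hd]
    exact_mod_cast hdn.ne'
  have hfne : f ≠ 0 := by
    intro h
    apply hdne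
    simp [h]
  have h1 : 1 ≤ f.rootMultiplicity ((2*k : ℕ) : ℂ) :=
    (Polynomial.rootMultiplicity_pos hfne).mpr hroot
  have h2 : ¬ 1 < f.rootMultiplicity ((2*k : ℕ) : ℂ) := by
    rw [Polynomial.one_lt_rootMultiplicity_iff_isRoot hfne]
    rintro ⟨-, h⟩
    exact hdne h
  omega
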